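/- For every progressive class U of ordinals, if every ordinal below β lies in the jump U^J, then every ordinal below ω^β lies in U, and moreover ω^β ∈ U. -/

import Mathlib

open Ordinal

def Progressive (U : Ordinal → Prop) : Prop :=
  ∀ α : Ordinal, (∀ γ < α, U γ) → U α

def Jump (U : Ordinal → Prop) (β : Ordinal) : Prop :=
  ∀ α : Ordinal, (∀ γ < α, U γ) → ∀ γ < α + (ω : Ordinal) ^ β, U γ

/-- If `U` is progressive and every ordinal below `β` is in `U^J`, then every
ordinal below `ω^β` is in `U`, and moreover `ω^β ∈ U`. -/
theorem jump_below_opow (U : Ordinal → Prop) (β : Ordinal)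
    (hU : Progressive U) (hβ : ∀ γ < β, Jump U γ) :
    (∀ δ < (ω : Ordinal) ^ β, U δ) ∧ U ((ω : Ordinal) ^ β) := by
  have main : ∀ δ < (ω : Ordinal) ^ β, U δ := by
    intro δ hδ
    rcases eq_or_ne δ 0 with rfl | hδ0
    · exact hU 0 (by intro γ hγ; exact absurd hγ not_lt_zero)
    · set g := Ordinal.log ω δ with hg
      have hglt : g < β := (Ordinal.lt_opow_iff_log_lt one_lt_omega0 hδ0).mp hδ
      have hδlt : δ < (ω : Ordinal) ^ g * ω := by
        rw [← opow_succ]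
        exact Ordinal.lt_opow_succ_log_self one_lt_omega0 δ
      obtain ⟨c, hc, hδc⟩ := (Ordinal.lt_mul_iff_of_isSuccLimit isSuccLimit_omega0).mp hδlt
      obtain ⟨n, rfl⟩ := Ordinal.lt_omega0.mp hc
      have key : ∀ n : ℕ, ∀ x < (ω : Ordinal) ^ g * n, U x := by
        intro n
        induction n with
        | zero => intro x hx; simp only [Nat.cast_zero, mul_zero] at hx; exact absurd hx not_lt_zero
        | succ k ih =>
          intro x hx
          have : (ω : Ordinal) ^ g * (k + 1 : ℕ) = (ω : Ordinal) ^ g * k + (ω : Ordinal) ^ g := by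
            push_cast
            rw [mul_add, mul_one]
          rw [this] at hx
          exact hβ g hglt _ ih x hx
      exact key n δ hδc
  exact ⟨main, hU _ main⟩
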